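/- Let P_1, P_2 be finite irreducible stochastic matrices with stationary distributions π_1, π_2, and suppose τ(P_1^{ℓ_0}) < 1 for some ℓ_0 ∈ ℕ, where τ(A) = (1/2) max_{x,x'} ‖A(x,·) − A(x',·)‖_1. Then ‖π_1 − π_2‖_1 ≤ (1 + (ℓ_0 − 1) n)/(1 − τ(P_1^{ℓ_0})) · ‖P_1 − P_2‖_1, where n is the number of states and ‖A‖_1 = Σ_{x,y}|A(x,y)|. -/

import Mathlib

open Matrix Finset MeasureTheory

/-- A row-stochastic matrix: nonnegative entries, each row sums to 1. -/
def RowStochastic {S : Type*} [Fintype S] (T : Matrix S S ℝ) : Prop :=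
  (∀ j k, 0 ≤ T j k) ∧ ∀ j, ∑ k, T j k = 1

/-- Irreducibility of a nonnegative matrix: every state reaches every state. -/
def MatIrreducible {S : Type*} [Fintype S] [DecidableEq S] (T : Matrix S S ℝ) : Prop :=
  ∀ i j, ∃ t : ℕ, 0 < (T ^ t) i j

/-- `d` is the period of state `i`: the gcd of the set of positive return times. -/
def IsGcdPeriod {S : Type*} [Fintype S] [DecidableEq S] (T : Matrix S S ℝ) (i : S) (d : ℕ) : Prop :=
  (∀ m : ℕ, 0 < m → 0 < (T ^ m) i i → d ∣ m) ∧
    ∀ e : ℕ, (∀ m : ℕ, 0 < m → 0 < (T ^ m) i i → e ∣ m) → e ∣ d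

/-- The neighborhood of node `n` on the `N`-cycle: all nodes within cyclic distance `nv`. -/
def nbhd (N nv : ℕ) (n : Fin N) : Finset (Fin N) :=
  Finset.univ.filter fun i => (n.val + N - i.val) % N ≤ nv ∨ (i.val + N - n.val) % N ≤ nv

/-- The PCA global transition matrix on configurations. -/
noncomputable def pcaP (N K nv : ℕ) (T : Matrix (Fin K) (Fin K) ℝ) :
    Matrix (Fin N → Fin K) (Fin N → Fin K) ℝ :=
  Matrix.of fun x y =>
    ∏ n : Fin N, (((nbhd N nv n).card : ℝ)⁻¹ * ∑ i ∈ nbhd N nv n, T (x i) (y n))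

/-- Cyclic class decomposition of `[K]` for `T` with period `d`. -/
def CyclicClasses {K : ℕ} (T : Matrix (Fin K) (Fin K) ℝ) (d : ℕ)
    (C : ℕ → Finset (Fin K)) : Prop :=
  (∀ r, C (r + d) = C r) ∧ (∀ k : Fin K, ∃! r : ℕ, r < d ∧ k ∈ C r) ∧
    ∀ j k, 0 < T j k → ∃ r, j ∈ C r ∧ k ∈ C (r + 1)

/-- The Dobrushin coefficient `τ(A) = (1/2) max_{x,x'} ‖A(x,·) − A(x',·)‖₁`. -/
noncomputable def tauCoef {S : Type*} [Fintype S] (A : Matrix S S ℝ) : ℝ :=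
  (1 / 2) * ⨆ p : S × S, ∑ y, |A p.1 y - A p.2 y|

set_option linter.unusedSectionVars false

section Aux
variable {S : Type*} [Fintype S] [DecidableEq S] [Nonempty S]

noncomputable def mnorm1 (M : Matrix S S ℝ) : ℝ := ∑ x, ∑ y, |M x y|

lemma mnorm1_nonneg (M : Matrix S S ℝ) : 0 ≤ mnorm1 M := by
  apply Finset.sum_nonneg; intro x _; apply Finset.sum_nonneg; intro y _; positivity

lemma rs_pow {P : Matrix S S ℝ} (h : RowStochastic P) (ℓ : ℕ) :
    RowStochastic (P ^ ℓ) := by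
  induction ℓ with
  | zero =>
    constructor
    · intro j k
      simp only [pow_zero, Matrix.one_apply]
      split <;> norm_num
    · intro j
      simp [pow_zero, Matrix.one_apply]
  | succ n ih =>
    rw [pow_succ]
    constructor
    · intro j k
      rw [Matrix.mul_apply]
      exact Finset.sum_nonneg fun z _ => mul_nonneg (ih.1 j z) (h.1 z k)
    · intro j
      simp only [Matrix.mul_apply]
      rw [Finset.sum_comm]
      calc ∑ z, ∑ k, (P ^ n) j z * P z k = ∑ z, (P ^ n) j z * ∑ k, P z k := by
            simp [Finset.mul_sum]
        _ = 1 := by simp [h.2]; exact ih.2 j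

lemma entry_le_one {P : Matrix S S ℝ} (h : RowStochastic P) (x z : S) : P x z ≤ 1 := by
  have := Finset.single_le_sum (f := fun k => P x k) (fun k _ => h.1 x k) (Finset.mem_univ z)
  rw [h.2 x] at this
  exact this

lemma mnorm1_triangle (M N : Matrix S S ℝ) : mnorm1 (M + N) ≤ mnorm1 M + mnorm1 N := by
  unfold mnorm1
  rw [← Finset.sum_add_distrib]
  apply Finset.sum_le_sum; intro x _
  rw [← Finset.sum_add_distrib]
  apply Finset.sum_le_sum; intro y _
  exact abs_add_le _ _

lemma mnorm1_mul_right (M Q : Matrix S S ℝ) (hQ : RowStochastic Q) :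
    mnorm1 (M * Q) ≤ mnorm1 M := by
  unfold mnorm1
  apply Finset.sum_le_sum; intro x _
  calc ∑ y, |(M * Q) x y| ≤ ∑ y, ∑ z, |M x z| * Q z y := by
        apply Finset.sum_le_sum; intro y _
        rw [Matrix.mul_apply]
        refine (Finset.abs_sum_le_sum_abs _ _).trans_eq ?_
        refine Finset.sum_congr rfl fun z _ => ?_
        rw [abs_mul, abs_of_nonneg (hQ.1 z y)]
    _ = ∑ z, |M x z| * ∑ y, Q z y := by rw [Finset.sum_comm]; simp [Finset.mul_sum]
    _ = ∑ z, |M x z| := by simp [hQ.2]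

lemma mnorm1_mul_left (Q M : Matrix S S ℝ) (hQ : RowStochastic Q) :
    mnorm1 (Q * M) ≤ (Fintype.card S : ℝ) * mnorm1 M := by
  unfold mnorm1
  calc ∑ x, ∑ y, |(Q * M) x y| ≤ ∑ x : S, ∑ y, ∑ z, |M z y| := by
        apply Finset.sum_le_sum; intro x _
        calc ∑ y, |(Q * M) x y| ≤ ∑ y, ∑ z, Q x z * |M z y| := by
              apply Finset.sum_le_sum; intro y _
              rw [Matrix.mul_apply]
              refine (Finset.abs_sum_le_sum_abs _ _).trans_eq ?_
              refine Finset.sum_congr rfl fun z _ => ?_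
              rw [abs_mul, abs_of_nonneg (hQ.1 x z)]
          _ ≤ ∑ y, ∑ z, |M z y| := by
              apply Finset.sum_le_sum; intro y _
              apply Finset.sum_le_sum; intro z _
              exact mul_le_of_le_one_left (abs_nonneg _) (entry_le_one hQ x z)
          _ = ∑ y, ∑ z, |M z y| := rfl
    _ = (Fintype.card S : ℝ) * ∑ z, ∑ y, |M z y| := by
        rw [Finset.sum_const, Finset.card_univ, nsmul_eq_mul]
        congr 1
        exact Finset.sum_comm

lemma telescope {P₁ P₂ : Matrix S S ℝ} (h1 : RowStochastic P₁) (h2 : RowStochastic P₂)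
    (m : ℕ) :
    mnorm1 (P₁ ^ (m + 1) - P₂ ^ (m + 1))
      ≤ (1 + (m : ℝ) * (Fintype.card S : ℝ)) * mnorm1 (P₁ - P₂) := by
  induction m with
  | zero => simp
  | succ k ih =>
    have hid : P₁ ^ (k + 2) - P₂ ^ (k + 2)
        = (P₁ ^ (k + 1) - P₂ ^ (k + 1)) * P₁ + P₂ ^ (k + 1) * (P₁ - P₂) := by
      rw [pow_succ, pow_succ]
      noncomm_ring
    rw [hid]
    have t1 := mnorm1_triangle ((P₁ ^ (k + 1) - P₂ ^ (k + 1)) * P₁) (P₂ ^ (k + 1) * (P₁ - P₂))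
    have t2 := mnorm1_mul_right (P₁ ^ (k + 1) - P₂ ^ (k + 1)) P₁ h1
    have t3 := mnorm1_mul_left (P₂ ^ (k + 1)) (P₁ - P₂) (rs_pow h2 (k + 1))
    have hN := mnorm1_nonneg (P₁ - P₂)
    have hcard : (0:ℝ) ≤ (Fintype.card S : ℝ) := by positivity
    push_cast
    nlinarith [ih]

lemma two_tau (A : Matrix S S ℝ) (x x' : S) :
    ∑ y, |A x y - A x' y| ≤ 2 * tauCoef A := by
  have hb : BddAbove (Set.range fun p : S × S => ∑ y, |A p.1 y - A p.2 y|) :=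
    Set.Finite.bddAbove (Set.finite_range _)
  have h := le_ciSup hb (x, x')
  unfold tauCoef
  linarith

lemma tau_nonneg (A : Matrix S S ℝ) : 0 ≤ tauCoef A := by
  obtain ⟨x⟩ := ‹Nonempty S›
  have := two_tau A x x
  simp at this
  linarith

lemma dobrushin (A : Matrix S S ℝ) (v : S → ℝ) (hv : ∑ x, v x = 0) :
    ∑ y, |∑ x, v x * A x y| ≤ tauCoef A * ∑ x, |v x| := by
  set vp : S → ℝ := fun x => max (v x) 0 with hvp
  set vm : S → ℝ := fun x => max (-v x) 0 with hvm
  have h1 : ∀ x, v x = vp x - vm x := by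
    intro x; simp only [hvp, hvm]
    rcases le_total (v x) 0 with h | h
    · rw [max_eq_right h, max_eq_left (by linarith)]; ring
    · rw [max_eq_left h, max_eq_right (by linarith)]; ring
  have h2 : ∀ x, |v x| = vp x + vm x := by
    intro x; simp only [hvp, hvm]
    rcases le_total (v x) 0 with h | h
    · rw [abs_of_nonpos h, max_eq_right h, max_eq_left (by linarith)]; ring
    · rw [abs_of_nonneg h, max_eq_left h, max_eq_right (by linarith)]; ring
  have hvp0 : ∀ x, 0 ≤ vp x := fun x => le_max_right _ _
  have hvm0 : ∀ x, 0 ≤ vm x := fun x => le_max_right _ _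
  set c : ℝ := ∑ x, vp x with hc
  have hc2 : ∑ x, vm x = c := by
    have : ∑ x, vm x = ∑ x, (vp x - v x) := by
      refine Finset.sum_congr rfl fun x _ => ?_
      have := h1 x; linarith
    rw [this, Finset.sum_sub_distrib, hv, sub_zero]
  have hc0 : 0 ≤ c := Finset.sum_nonneg fun x _ => hvp0 x
  rcases hc0.eq_or_lt with hc0' | hcpos
  · -- c = 0, so v = 0
    have hvz : ∀ x, v x = 0 := by
      intro x
      have hp : vp x = 0 := by
        have := (Finset.sum_eq_zero_iff_of_nonneg (fun x _ => hvp0 x)).1 hc0'.symm x (Finset.mem_univ x)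
        exact this
      have hm : vm x = 0 := by
        have := (Finset.sum_eq_zero_iff_of_nonneg (fun x _ => hvm0 x)).1 (hc2.trans hc0'.symm) x (Finset.mem_univ x)
        exact this
      rw [h1 x, hp, hm]; ring
    have : ∑ y, |∑ x, v x * A x y| = 0 := by
      apply Finset.sum_eq_zero; intro y _
      rw [Finset.sum_eq_zero fun x _ => by rw [hvz x]; ring]
      simp
    rw [this]
    have : ∑ x, |v x| = 0 := Finset.sum_eq_zero fun x _ => by rw [hvz x]; simp
    rw [this, mul_zero]
  · rw [← mul_le_mul_iff_of_pos_left hcpos]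
    have key : ∀ y, c * (∑ x, v x * A x y)
        = ∑ x, ∑ x', vp x * vm x' * (A x y - A x' y) := by
      intro y
      have inner : ∀ x, ∑ x', vp x * vm x' * (A x y - A x' y)
          = vp x * A x y * c - vp x * ∑ x', vm x' * A x' y := by
        intro x
        rw [← hc2, Finset.mul_sum, Finset.mul_sum, ← Finset.sum_sub_distrib]
        exact Finset.sum_congr rfl fun x' _ => by ring
      rw [Finset.sum_congr rfl fun x _ => inner x, Finset.sum_sub_distrib,
        ← Finset.sum_mul, ← Finset.sum_mul]
      have hexp : ∑ x, v x * A x y = ∑ x, vp x * A x y - ∑ x, vm x * A x y := by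
        rw [← Finset.sum_sub_distrib]
        exact Finset.sum_congr rfl fun x _ => by rw [h1 x]; ring
      rw [hexp, ← hc]
      ring
    have habs : ∀ y, c * |∑ x, v x * A x y|
        ≤ ∑ x, ∑ x', vp x * vm x' * |A x y - A x' y| := by
      intro y
      rw [← abs_of_nonneg hc0 (a := c), ← abs_mul, key y]
      refine (Finset.abs_sum_le_sum_abs _ _).trans ?_
      refine Finset.sum_le_sum fun x _ => ?_
      refine (Finset.abs_sum_le_sum_abs _ _).trans ?_
      refine Finset.sum_le_sum fun x' _ => ?_
      rw [abs_mul, abs_of_nonneg (mul_nonneg (hvp0 x) (hvm0 x'))]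
    have hsum : ∑ y, ∑ x, ∑ x', vp x * vm x' * |A x y - A x' y|
        ≤ 2 * tauCoef A * c * c := by
      rw [Finset.sum_comm]
      calc ∑ x, ∑ y, ∑ x', vp x * vm x' * |A x y - A x' y|
          = ∑ x, ∑ x', vp x * vm x' * ∑ y, |A x y - A x' y| := by
            refine Finset.sum_congr rfl fun x _ => ?_
            rw [Finset.sum_comm]
            exact Finset.sum_congr rfl fun x' _ => by rw [Finset.mul_sum]
        _ ≤ ∑ x, ∑ x', vp x * vm x' * (2 * tauCoef A) := by
            refine Finset.sum_le_sum fun x _ => Finset.sum_le_sum fun x' _ => ?_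
            exact mul_le_mul_of_nonneg_left (two_tau A x x')
              (mul_nonneg (hvp0 x) (hvm0 x'))
        _ = 2 * tauCoef A * c * c := by
            have inner2 : ∀ x : S, ∑ x', vp x * vm x' * (2 * tauCoef A)
                = vp x * c * (2 * tauCoef A) := by
              intro x
              rw [← Finset.sum_mul, ← Finset.mul_sum, hc2]
            rw [Finset.sum_congr rfl fun x _ => inner2 x, ← Finset.sum_mul, ← Finset.sum_mul, ← hc]
            ring
    have lhs_eq : c * ∑ y, |∑ x, v x * A x y| = ∑ y, c * |∑ x, v x * A x y| := by
      rw [Finset.mul_sum]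
    have step : c * ∑ y, |∑ x, v x * A x y| ≤ 2 * tauCoef A * c * c := by
      rw [lhs_eq]
      exact le_trans (Finset.sum_le_sum fun y _ => habs y) hsum
    have habsv : ∑ x, |v x| = 2 * c := by
      rw [Finset.sum_congr rfl fun x _ => h2 x, Finset.sum_add_distrib, hc2, ← hc]
      ring
    calc c * ∑ y, |∑ x, v x * A x y| ≤ 2 * tauCoef A * c * c := step
      _ = c * (tauCoef A * ∑ x, |v x|) := by rw [habsv]; ring

lemma stationary_pow (P : Matrix S S ℝ) (π : S → ℝ)
    (hst : ∀ y, ∑ x, π x * P x y = π y) (ℓ : ℕ) (y : S) :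
    ∑ x, π x * (P ^ ℓ) x y = π y := by
  induction ℓ generalizing y with
  | zero => simp [Matrix.one_apply]
  | succ n ih =>
    rw [pow_succ]
    simp only [Matrix.mul_apply, Finset.mul_sum]
    rw [Finset.sum_comm]
    have inner : ∀ z, ∑ x, π x * ((P ^ n) x z * P z y) = π z * P z y := by
      intro z
      have : ∑ x, π x * ((P ^ n) x z * P z y) = (∑ x, π x * (P ^ n) x z) * P z y := by
        rw [Finset.sum_mul]
        exact Finset.sum_congr rfl fun x _ => by ring
      rw [this, ih z]
    rw [Finset.sum_congr rfl fun z _ => inner z]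
    exact hst y

end Aux

/-- For finite irreducible stochastic matrices `P₁, P₂` with stationary
distributions `π₁, π₂` and `τ(P₁^{ℓ₀}) < 1`,
`‖π₁ − π₂‖₁ ≤ (1 + (ℓ₀ − 1) n)/(1 − τ(P₁^{ℓ₀})) ‖P₁ − P₂‖₁`, `n` the number of states. -/
theorem stmt_15 {S : Type*} [Fintype S] [DecidableEq S] [Nonempty S]
    (P₁ P₂ : Matrix S S ℝ) (hs₁ : RowStochastic P₁) (hs₂ : RowStochastic P₂)
    (hi₁ : MatIrreducible P₁) (hi₂ : MatIrreducible P₂)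
    (π₁ π₂ : S → ℝ)
    (hπ₁ : (∀ x, 0 ≤ π₁ x) ∧ (∑ x, π₁ x = 1) ∧ ∀ y, ∑ x, π₁ x * P₁ x y = π₁ y)
    (hπ₂ : (∀ x, 0 ≤ π₂ x) ∧ (∑ x, π₂ x = 1) ∧ ∀ y, ∑ x, π₂ x * P₂ x y = π₂ y)
    (ℓ₀ : ℕ) (hτ : tauCoef (P₁ ^ ℓ₀) < 1) :
    ∑ x, |π₁ x - π₂ x|
      ≤ (1 + ((ℓ₀ : ℝ) - 1) * (Fintype.card S : ℝ)) / (1 - tauCoef (P₁ ^ ℓ₀))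
        * ∑ x, ∑ y, |P₁ x y - P₂ x y| := by
  obtain ⟨hπ₁0, hπ₁s, hπ₁st⟩ := hπ₁
  obtain ⟨hπ₂0, hπ₂s, hπ₂st⟩ := hπ₂
  have hτ0 : 0 ≤ tauCoef (P₁ ^ ℓ₀) := tau_nonneg _
  have h1τ : 0 < 1 - tauCoef (P₁ ^ ℓ₀) := by linarith
  rcases Nat.eq_zero_or_pos ℓ₀ with h0 | hpos
  · subst h0
    have hcard : Fintype.card S = 1 := by
      by_contra hne
      have h2 : 1 < Fintype.card S := lt_of_le_of_ne Fintype.card_pos (Ne.symm hne)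
      obtain ⟨a, b, hab⟩ := Fintype.one_lt_card_iff.mp h2
      have htt := two_tau (P₁ ^ 0) a b
      have hpair : ∑ y ∈ ({a, b} : Finset S), |(P₁ ^ 0) a y - (P₁ ^ 0) b y| = 2 := by
        rw [Finset.sum_pair hab]
        simp [pow_zero, Matrix.one_apply, hab, hab.symm]
        norm_num
      have hge : (2:ℝ) ≤ ∑ y, |(P₁ ^ 0) a y - (P₁ ^ 0) b y| := by
        rw [← hpair]
        exact Finset.sum_le_sum_of_subset_of_nonneg (Finset.subset_univ _)
          (fun y _ _ => abs_nonneg _)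
      linarith
    have hsub : Subsingleton S := Fintype.card_le_one_iff_subsingleton.mp (le_of_eq hcard)
    have hLHS : ∑ x, |π₁ x - π₂ x| = 0 := by
      apply Finset.sum_eq_zero; intro x _
      have h1 : π₁ x = 1 := by rw [← hπ₁s]; exact (Fintype.sum_subsingleton _ x).symm
      have h2 : π₂ x = 1 := by rw [← hπ₂s]; exact (Fintype.sum_subsingleton _ x).symm
      rw [h1, h2]; simp
    rw [hLHS]
    have hcoef : (1 + ((0:ℕ) - 1 : ℝ) * (Fintype.card S : ℝ)) = 0 := by
      rw [hcard]; norm_num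
    push_cast at hcoef ⊢
    rw [hcoef]
    simp
  · obtain ⟨m, rfl⟩ := Nat.exists_eq_succ_of_ne_zero (Nat.pos_iff_ne_zero.mp hpos)
    set A := P₁ ^ (m + 1) with hA
    set B := P₂ ^ (m + 1) with hB
    set v : S → ℝ := fun x => π₁ x - π₂ x with hvdef
    have hv0 : ∑ x, v x = 0 := by
      simp only [hvdef, Finset.sum_sub_distrib, hπ₁s, hπ₂s, sub_self]
    have hdecomp : ∀ y, v y = (∑ x, v x * A x y) + ∑ x, π₂ x * (A x y - B x y) := by
      intro y
      have e1 := stationary_pow P₁ π₁ hπ₁st (m + 1) y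
      have e2 := stationary_pow P₂ π₂ hπ₂st (m + 1) y
      calc v y = ∑ x, π₁ x * A x y - ∑ x, π₂ x * B x y := by rw [e1, e2]
        _ = ∑ x, (π₁ x * A x y - π₂ x * B x y) := by rw [Finset.sum_sub_distrib]
        _ = ∑ x, ((π₁ x - π₂ x) * A x y + π₂ x * (A x y - B x y)) :=
            Finset.sum_congr rfl fun x _ => by ring
        _ = (∑ x, v x * A x y) + ∑ x, π₂ x * (A x y - B x y) := Finset.sum_add_distrib
    have hπ₂le : ∀ x, π₂ x ≤ 1 := by
      intro x
      have := Finset.single_le_sum (f := π₂) (fun i _ => hπ₂0 i) (Finset.mem_univ x)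
      rw [hπ₂s] at this
      exact this
    have hB2 : ∑ y, |∑ x, π₂ x * (A x y - B x y)| ≤ mnorm1 (A - B) := by
      calc ∑ y, |∑ x, π₂ x * (A x y - B x y)|
          ≤ ∑ y, ∑ x, |A x y - B x y| := by
            refine Finset.sum_le_sum fun y _ => ?_
            refine (Finset.abs_sum_le_sum_abs _ _).trans ?_
            refine Finset.sum_le_sum fun x _ => ?_
            rw [abs_mul, abs_of_nonneg (hπ₂0 x)]
            exact mul_le_of_le_one_left (abs_nonneg _) (hπ₂le x)
        _ = mnorm1 (A - B) := by
            unfold mnorm1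
            rw [Finset.sum_comm]
            exact Finset.sum_congr rfl fun x _ => Finset.sum_congr rfl fun y _ => by
              rw [Matrix.sub_apply]
    have hmain : ∑ y, |v y| ≤ tauCoef A * ∑ x, |v x| + mnorm1 (A - B) := by
      calc ∑ y, |v y|
          = ∑ y, |(∑ x, v x * A x y) + ∑ x, π₂ x * (A x y - B x y)| :=
            Finset.sum_congr rfl fun y _ => by rw [← hdecomp y]
        _ ≤ ∑ y, (|∑ x, v x * A x y| + |∑ x, π₂ x * (A x y - B x y)|) :=
            Finset.sum_le_sum fun y _ => abs_add_le _ _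
        _ = (∑ y, |∑ x, v x * A x y|) + ∑ y, |∑ x, π₂ x * (A x y - B x y)| :=
            Finset.sum_add_distrib
        _ ≤ tauCoef A * ∑ x, |v x| + mnorm1 (A - B) :=
            add_le_add (dobrushin A v hv0) hB2
    have htel := telescope hs₁ hs₂ m
    have hNdef : mnorm1 (P₁ - P₂) = ∑ x, ∑ y, |P₁ x y - P₂ x y| := by
      unfold mnorm1
      exact Finset.sum_congr rfl fun x _ => Finset.sum_congr rfl fun y _ => by
        rw [Matrix.sub_apply]
    have hL : ∑ x, |π₁ x - π₂ x| = ∑ x, |v x| := rfl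
    rw [hL, ← hNdef, div_mul_eq_mul_div, le_div_iff₀ h1τ]
    have hcoef : (1 + (((m + 1 : ℕ) : ℝ) - 1) * (Fintype.card S : ℝ))
        = 1 + (m : ℝ) * (Fintype.card S : ℝ) := by push_cast; ring
    have hvge : 0 ≤ ∑ x, |v x| := Finset.sum_nonneg fun x _ => abs_nonneg _
    push_cast
    nlinarith [hmain, htel]
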